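/- Let E be a finite-dimensional real inner product space, let f : E → ℝ be convex and continuously differentiable with a global minimizer x*, and let p ≥ 1 be an integer. Fix x₀ ∈ E, points x₁, …, x_t ∈ E, and weights a₁, …, a_t ≥ 0 with A = Σ_{s=1}^t a_s > 0, and define the estimating function ψ(z) = (1/(p+1))·‖z − x₀‖^{p+1} + Σ_{s=1}^{t} a_s·(f(x_s) + ⟨∇f(x_s), z − x_s⟩). If A·f(x_t) ≤ ψ(z) for every z ∈ E, then f(x_t) − f(x*) ≤ ‖x* − x₀‖^{p+1} / ((p+1)·A). -/

import Mathlib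

open scoped RealInnerProductSpace

theorem grad_lower_bound {E : Type*} [NormedAddCommGroup E] [InnerProductSpace ℝ E] [CompleteSpace E]
    (f : E → ℝ) (hconv : ConvexOn ℝ Set.univ f) (hdiff : ContDiff ℝ 1 f) (w y : E) :
    f w + ⟪gradient f w, y - w⟫ ≤ f y := by
  have hdf : DifferentiableAt ℝ f w := (hdiff.differentiable one_ne_zero) w
  set v := y - w with hv
  -- g ε = f (w + ε • v)
  have hg : HasDerivAt (fun ε : ℝ => f (w + ε • v)) (⟪gradient f w, v⟫) 0 := by
    have h1 : HasDerivAt (fun ε : ℝ => w + ε • v) v 0 := by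
      simpa using ((hasDerivAt_id (0:ℝ)).smul_const v).const_add w
    have h2 : HasFDerivAt f (InnerProductSpace.toDual ℝ E (gradient f w)) w :=
      hdf.hasGradientAt.hasFDerivAt
    have h2' : HasFDerivAt f (InnerProductSpace.toDual ℝ E (gradient f w)) (w + (0:ℝ) • v) := by
      simpa using h2
    have : HasDerivAt (fun ε : ℝ => f (w + ε • v)) (InnerProductSpace.toDual ℝ E (gradient f w) v) 0 :=
      h2'.comp_hasDerivAt (x := (0:ℝ)) h1
    simpa [InnerProductSpace.toDual_apply_apply] using this
  have key : ⟪gradient f w, v⟫ ≤ f y - f w := by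
    have htend : Filter.Tendsto (fun ε : ℝ => (f (w + ε • v) - f w) / ε)
        (nhdsWithin 0 (Set.Ioi 0)) (nhds (⟪gradient f w, v⟫)) := by
      have := hasDerivAt_iff_tendsto_slope.mp hg
      refine this.mono_left (nhdsWithin_mono _ ?_) |>.congr' ?_
      · intro z hz; exact ne_of_gt hz
      · filter_upwards [self_mem_nhdsWithin] with ε hε
        simp [slope, vsub_eq_sub, div_eq_inv_mul]
    refine le_of_tendsto htend ?_
    filter_upwards [Ioo_mem_nhdsGT_of_mem (by norm_num : (0:ℝ) ∈ Set.Ico 0 1)]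
      with ε hε
    obtain ⟨hε0, hε1⟩ := hε
    have hconvε : f (w + ε • v) ≤ (1 - ε) * f w + ε * f y := by
      have := hconv.2 (Set.mem_univ w) (Set.mem_univ y)
        (by linarith : (0:ℝ) ≤ 1 - ε) (le_of_lt hε0) (by ring)
      have heq : (1 - ε) • w + ε • y = w + ε • v := by
        simp [hv, smul_sub, sub_smul]; abel
      rw [heq] at this
      simpa using this
    rw [div_le_iff₀ hε0]
    nlinarith
  linarith [key]

theorem estimating_function_rate {E : Type*} [NormedAddCommGroup E] [InnerProductSpace ℝ E]
    [FiniteDimensional ℝ E]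
    (f : E → ℝ) (xs : E) (p : ℕ) (hp : 1 ≤ p)
    (hconv : ConvexOn ℝ Set.univ f)
    (hdiff : ContDiff ℝ 1 f)
    (hmin : ∀ y : E, f xs ≤ f y)
    (x₀ : E) (t : ℕ) (x : ℕ → E) (a : ℕ → ℝ)
    (ha : ∀ s ∈ Finset.Icc 1 t, 0 ≤ a s)
    (A : ℝ) (hA : A = ∑ s ∈ Finset.Icc 1 t, a s) (hApos : 0 < A)
    (hψ : ∀ z : E, A * f (x t) ≤
      1 / ((p : ℝ) + 1) * ‖z - x₀‖ ^ (p + 1) +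
        ∑ s ∈ Finset.Icc 1 t, a s * (f (x s) + ⟪gradient f (x s), z - x s⟫)) :
    f (x t) - f xs ≤ ‖xs - x₀‖ ^ (p + 1) / (((p : ℝ) + 1) * A) := by
  have h := hψ xs
  have hsum : ∑ s ∈ Finset.Icc 1 t, a s * (f (x s) + ⟪gradient f (x s), xs - x s⟫)
      ≤ A * f xs := by
    rw [hA, Finset.sum_mul]
    refine Finset.sum_le_sum fun s hs => ?_
    have := grad_lower_bound f hconv hdiff (x s) xs
    have has := ha s hs
    nlinarith
  have hp1 : (0:ℝ) < (p:ℝ) + 1 := by positivity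
  have : A * f (x t) ≤ 1 / ((p : ℝ) + 1) * ‖xs - x₀‖ ^ (p + 1) + A * f xs := by linarith
  rw [le_div_iff₀ (by positivity)]
  have hmul : (A * f (x t) - A * f xs) * ((p:ℝ)+1) ≤ ‖xs - x₀‖ ^ (p + 1) := by
    have := mul_le_mul_of_nonneg_right (by linarith :
      A * f (x t) - A * f xs ≤ 1 / ((p : ℝ) + 1) * ‖xs - x₀‖ ^ (p + 1)) hp1.le
    calc (A * f (x t) - A * f xs) * ((p:ℝ)+1)
        ≤ 1 / ((p : ℝ) + 1) * ‖xs - x₀‖ ^ (p + 1) * ((p:ℝ)+1) := this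
      _ = ‖xs - x₀‖ ^ (p + 1) := by field_simp
  nlinarith
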